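/- Let φ : ℚ[T,X,Y] → ℚ[x,y,z] be the ℚ-algebra homomorphism determined by T ↦ z, X ↦ x², Y ↦ y² + 2xz. For every integer ℓ ≥ 1, the induced ring homomorphism ℚ[T,X,Y]/⟨T·∏_{i=1}^{ℓ}(T² + i⁴X − i²Y)⟩ → ℚ[x,y,z]/⟨z·∏_{i=1}^{ℓ}((z − i²x)² − i²y²)⟩ is injective; that is, if g ∈ ℚ[T,X,Y] satisfies φ(g) ∈ ⟨z·∏_{i=1}^{ℓ}((z − i²x)² − i²y²)⟩, then g ∈ ⟨T·∏_{i=1}^{ℓ}(T² + i⁴X − i²Y)⟩. -/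

import Mathlib

open MvPolynomial Finset

/-- The ℚ-algebra homomorphism ℚ[T,X,Y] → ℚ[x,y,z] (both modeled as
`MvPolynomial (Fin 3) ℚ`, with `T = X 0, X = X 1, Y = X 2` in the source and
`x = X 0, y = X 1, z = X 2` in the target) determined by
`T ↦ z`, `X ↦ x²`, `Y ↦ y² + 2xz`. -/
noncomputable def phi : MvPolynomial (Fin 3) ℚ →ₐ[ℚ] MvPolynomial (Fin 3) ℚ :=
  aeval ![X 2, X 0 ^ 2, X 1 ^ 2 + 2 * X 0 * X 2]

section Auxiliary

abbrev S3 := MvPolynomial (Fin 3) ℚ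

/-! ### Substitution / kernel lemmas -/

lemma key_dvd (k : Fin 3) (u : Fin 3 → S3)
    (hu : ∀ j, j ≠ k → u j = X j) (f : S3) :
    (X k - u k) ∣ (f - aeval u f) := by
  induction f using MvPolynomial.induction_on with
  | C a => simp
  | add p q hp hq =>
      rw [map_add]
      have := dvd_add hp hq
      rwa [sub_add_sub_comm] at this
  | mul_X p j hp =>
      rw [map_mul, aeval_X]
      by_cases hj : j = k
      · subst hj
        have h : p * X j - aeval u p * u j
            = (p - aeval u p) * X j + aeval u p * (X j - u j) := by ring
        rw [h]
        exact dvd_add (hp.mul_right _) (Dvd.dvd.mul_left dvd_rfl _)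
      · rw [hu j hj]
        have h : p * X j - aeval u p * X j = (p - aeval u p) * X j := by ring
        rw [h]
        exact hp.mul_right _

lemma dvd_iff_eval (k : Fin 3) (u : Fin 3 → S3)
    (hu : ∀ j, j ≠ k → u j = X j) (hc : aeval u (u k) = u k) (f : S3) :
    (X k - u k) ∣ f ↔ aeval u f = 0 := by
  constructor
  · rintro ⟨m, rfl⟩
    rw [map_mul, map_sub, aeval_X, hc, sub_self, zero_mul]
  · intro h
    have := key_dvd k u hu f
    rwa [h, sub_zero] at this

lemma prime_lin (k : Fin 3) (u : Fin 3 → S3)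
    (hu : ∀ j, j ≠ k → u j = X j) (hc : aeval u (u k) = u k)
    (h0 : (X k : S3) - u k ≠ 0) : Prime ((X k : S3) - u k) := by
  refine ⟨h0, ?_, ?_⟩
  · intro h
    have h1 : ((X k : S3) - u k) ∣ 1 := h.dvd
    rw [dvd_iff_eval k u hu hc] at h1
    simp at h1
  · intro a b hab
    rw [dvd_iff_eval k u hu hc, map_mul, mul_eq_zero] at hab
    rw [dvd_iff_eval k u hu hc, dvd_iff_eval k u hu hc]
    exact hab

/-! ### Injectivity of auxiliary substitutions -/

lemma sq0_comp (f : S3) :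
    finSuccEquiv ℚ 2 (aeval ![X 0 ^ 2, X 1, X 2] f)
      = (finSuccEquiv ℚ 2 f).comp (Polynomial.X ^ 2) := by
  induction f using MvPolynomial.induction_on with
  | C a => simp [finSuccEquiv_apply]
  | add p q hp hq => rw [map_add, map_add, map_add, Polynomial.add_comp, hp, hq]
  | mul_X p j hp =>
      rw [map_mul, map_mul, map_mul, Polynomial.mul_comp, hp]
      refine congrArg₂ (· * ·) rfl ?_
      have t1 : (1 : Fin 3) = Fin.succ 0 := rfl
      have t2 : (2 : Fin 3) = Fin.succ 1 := rfl
      fin_cases j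
      · rw [show (X (⟨0, by norm_num⟩ : Fin 3) : S3) = X 0 from rfl]
        simp only [aeval_X, Matrix.cons_val_zero, map_pow, finSuccEquiv_X_zero,
          Polynomial.X_comp]
      · rw [show (X (⟨1, by norm_num⟩ : Fin 3) : S3) = X 1 from rfl]
        simp only [aeval_X, Matrix.cons_val_one, Matrix.head_cons, Matrix.cons_val_zero]
        rw [t1, finSuccEquiv_X_succ, Polynomial.C_comp]
      · rw [show (X (⟨2, by norm_num⟩ : Fin 3) : S3) = X 2 from rfl]
        simp only [aeval_X, Matrix.cons_val_two, Matrix.tail_cons, Matrix.head_cons]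
        rw [t2, finSuccEquiv_X_succ, Polynomial.C_comp]

noncomputable def sq0 : S3 →ₐ[ℚ] S3 := aeval ![X 0 ^ 2, X 1, X 2]
noncomputable def sq1 : S3 →ₐ[ℚ] S3 := aeval ![X 0, X 1 ^ 2, X 2]
noncomputable def alphaH : S3 →ₐ[ℚ] S3 := aeval ![X 1, X 0 ^ 2, X 2]
noncomputable def eta0 : S3 →ₐ[ℚ] S3 := aeval ![X 2, X 0 ^ 2, X 1 ^ 2]

lemma sq0_inj' : Function.Injective (sq0 : S3 → S3) := by
  rw [show (⇑sq0 : S3 → S3) = ⇑(aeval ![X 0 ^ 2, X 1, X 2] : S3 →ₐ[ℚ] S3) from rfl]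
  rw [injective_iff_map_eq_zero]
  intro f hf
  have h := sq0_comp f
  rw [hf, map_zero] at h
  rcases Polynomial.comp_eq_zero_iff.mp h.symm with h1 | ⟨_, h2⟩
  · exact (finSuccEquiv ℚ 2).injective (by simp [h1])
  · exfalso
    have := congrArg Polynomial.natDegree h2
    simp [Polynomial.natDegree_X_pow] at this

lemma sq1_eq : sq1 = (rename (Equiv.swap 0 1)).comp
    (sq0.comp (rename (Equiv.swap (0 : Fin 3) 1))) := by
  apply algHom_ext
  intro j
  fin_cases j <;>
    simp [sq0, sq1, rename_X, Equiv.swap_apply_def]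

lemma sq1_inj : Function.Injective (sq1 : S3 → S3) := by
  rw [sq1_eq]
  simp only [AlgHom.coe_comp]
  exact (rename_injective _ (Equiv.swap 0 1).injective).comp
    (sq0_inj'.comp (rename_injective _ (Equiv.swap (0 : Fin 3) 1).injective))

lemma alpha_eq : alphaH = sq0.comp (rename (Equiv.swap (0 : Fin 3) 1)) := by
  apply algHom_ext
  intro j
  fin_cases j <;>
    simp [sq0, alphaH, rename_X, Equiv.swap_apply_def]

lemma alpha_inj : Function.Injective (alphaH : S3 → S3) := by
  rw [alpha_eq]
  simp only [AlgHom.coe_comp]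
  exact sq0_inj'.comp (rename_injective _ (Equiv.swap (0 : Fin 3) 1).injective)

lemma eta0_eq : eta0 = sq1.comp (sq0.comp (rename ((finRotate 3).symm))) := by
  have r0 : (finRotate 3).symm 0 = 2 := by decide
  have r1 : (finRotate 3).symm 1 = 0 := by decide
  have r2 : (finRotate 3).symm 2 = 1 := by decide
  apply algHom_ext
  intro j
  fin_cases j <;>
    simp [sq0, sq1, eta0, rename_X, r0, r1, r2]

lemma eta0_inj : Function.Injective (eta0 : S3 → S3) := by
  rw [eta0_eq]
  simp only [AlgHom.coe_comp]
  exact sq1_inj.comp (sq0_inj'.comp (rename_injective _ ((finRotate 3).symm).injective))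

/-! ### The commuting squares -/

noncomputable def chiI (i : ℕ) : S3 →ₐ[ℚ] S3 :=
  aeval ![X 0, C ((i : ℚ))⁻¹ * (X 1 - C ((i : ℚ) ^ 2) * X 0), X 1]

noncomputable def uI (i : ℕ) : Fin 3 → S3 :=
  ![X 0, X 1, C ((i : ℚ) ^ 2)⁻¹ * X 0 ^ 2 + C ((i : ℚ) ^ 2) * X 1]

noncomputable def chi0H : S3 →ₐ[ℚ] S3 := aeval ![X 0, X 1, 0]
noncomputable def u0 : Fin 3 → S3 := ![0, X 1, X 2]

lemma comp0 : chi0H.comp phi = eta0.comp (aeval u0) := by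
  apply algHom_ext
  intro j
  fin_cases j <;> simp [phi, chi0H, eta0, u0]

lemma compI (i : ℕ) (hi : (i : ℚ) ≠ 0) :
    (chiI i).comp phi = alphaH.comp (aeval (uI i)) := by
  have h : (C (i : ℚ) : S3) * C ((i : ℚ))⁻¹ = 1 := by
    rw [← C_mul, mul_inv_cancel₀ hi, C_1]
  have e2 : ((i : ℚ) ^ 2)⁻¹ = (i : ℚ)⁻¹ * (i : ℚ)⁻¹ := by
    rw [sq, mul_inv]
  apply algHom_ext
  intro j
  fin_cases j
  · simp [phi, chiI, alphaH, uI]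
  · simp [phi, chiI, alphaH, uI]
  · show (chiI i) (phi (X 2)) = alphaH ((aeval (uI i)) (X 2))
    simp only [phi, chiI, alphaH, uI, aeval_X, map_add, map_mul, map_pow, map_ofNat,
      Matrix.cons_val_zero, Matrix.cons_val_one, Matrix.head_cons, Matrix.cons_val_two,
      Matrix.tail_cons, aeval_C, algebraMap_eq]
    rw [e2, C_mul]
    linear_combination ((C (i : ℚ) * C ((i : ℚ))⁻¹ + 1)
      * (C (i : ℚ) * C (i : ℚ) * X 0 ^ 2 - 2 * X 0 * X 1)) * h

/-! ### Product of primes divides -/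

lemma prod_primes_dvd'' {M : Type*} [CommMonoidWithZero M] [IsCancelMulZero M] {ι : Type*}
    [DecidableEq ι] (s : Finset ι) (f : ι → M) (g : M)
    (hp : ∀ i ∈ s, Prime (f i))
    (hnd : ∀ i ∈ s, ∀ j ∈ s, i ≠ j → ¬ (f i ∣ f j))
    (hd : ∀ i ∈ s, f i ∣ g) : (∏ i ∈ s, f i) ∣ g := by
  induction s using Finset.induction_on generalizing g with
  | empty => simp
  | @insert a s ha ih =>
      obtain ⟨m, rfl⟩ := hd a (mem_insert_self a s)
      have hm : ∀ j ∈ s, f j ∣ m := by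
        intro j hj
        have hja : j ≠ a := by rintro rfl; exact ha hj
        rcases (hp j (mem_insert_of_mem hj)).dvd_or_dvd (hd j (mem_insert_of_mem hj)) with
          hc | hc
        · exact absurd hc (hnd j (mem_insert_of_mem hj) a (mem_insert_self a s) hja)
        · exact hc
      rw [Finset.prod_insert ha]
      exact mul_dvd_mul_left (f a)
        (ih m (fun i hi => hp i (mem_insert_of_mem hi))
          (fun i hi j hj hij => hnd i (mem_insert_of_mem hi) j (mem_insert_of_mem hj) hij)
          hm)

/-! ### Facts about the linear forms `qI i = X 2 - uI i 2` -/

lemma huI (i : ℕ) : ∀ j, j ≠ (2 : Fin 3) → uI i j = X j := by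
  intro j hj
  fin_cases j
  · rfl
  · rfl
  · exact absurd rfl hj

lemma hcI (i : ℕ) : aeval (uI i) (uI i 2) = uI i 2 := by
  simp [uI]

lemma qI_ne (i : ℕ) : (X 2 : S3) - uI i 2 ≠ 0 := by
  intro h
  have := congrArg (eval ![0, 0, 1]) h
  simp [uI] at this

lemma qI_prime (i : ℕ) : Prime ((X 2 : S3) - uI i 2) :=
  prime_lin 2 (uI i) (huI i) (hcI i) (qI_ne i)

lemma hu0 : ∀ j, j ≠ (0 : Fin 3) → u0 j = X j := by
  intro j hj
  fin_cases j
  · exact absurd rfl hj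
  · rfl
  · rfl

lemma hc0 : aeval u0 (u0 0) = u0 0 := by simp [u0]

end Auxiliary

/-- The induced map
`ℚ[T,X,Y]/⟨T·∏_{i=1}^{ℓ}(T² + i⁴X − i²Y)⟩ → ℚ[x,y,z]/⟨z·∏_{i=1}^{ℓ}((z − i²x)² − i²y²)⟩`
is injective: if `φ(g)` lies in the target relation ideal, then `g` lies in the
source relation ideal. -/
theorem induced_map_injective (ℓ : ℕ) (hℓ : 1 ≤ ℓ) (g : MvPolynomial (Fin 3) ℚ)
    (hg : phi g ∈ Ideal.span {(X 2 : MvPolynomial (Fin 3) ℚ) * ∏ i ∈ Icc 1 ℓ,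
        ((X 2 - C ((i : ℚ) ^ 2) * X 0) ^ 2 - C ((i : ℚ) ^ 2) * X 1 ^ 2)}) :
    g ∈ Ideal.span {(X 0 : MvPolynomial (Fin 3) ℚ) * ∏ i ∈ Icc 1 ℓ,
        (X 0 ^ 2 + C ((i : ℚ) ^ 4) * X 1 - C ((i : ℚ) ^ 2) * X 2)} := by
  classical
  rw [Ideal.mem_span_singleton] at hg ⊢
  set Q : S3 := (X 2 : S3) * ∏ i ∈ Icc 1 ℓ,
      ((X 2 - C ((i : ℚ) ^ 2) * X 0) ^ 2 - C ((i : ℚ) ^ 2) * X 1 ^ 2) with hQ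
  -- Step 1: each `qI i` divides `g`
  have hq : ∀ i ∈ Icc 1 ℓ, ((X 2 : S3) - uI i 2) ∣ g := by
    intro i hi
    have hi1 : 1 ≤ i := (mem_Icc.mp hi).1
    have hiq : (i : ℚ) ≠ 0 := Nat.cast_ne_zero.mpr (by omega)
    have hfac : chiI i ((X 2 - C ((i : ℚ) ^ 2) * X 0) ^ 2 - C ((i : ℚ) ^ 2) * X 1 ^ 2) = 0 := by
      have h : (C (i : ℚ) : S3) * C ((i : ℚ))⁻¹ = 1 := by
        rw [← C_mul, mul_inv_cancel₀ hiq, C_1]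
      simp only [chiI, map_sub, map_mul, map_pow, aeval_X, aeval_C, algebraMap_eq,
        Matrix.cons_val_zero, Matrix.cons_val_one, Matrix.head_cons, Matrix.cons_val_two,
        Matrix.tail_cons]
      linear_combination (-((X 1 - C (i : ℚ) ^ 2 * X 0) ^ 2)
        * (1 + C (i : ℚ) * C ((i : ℚ))⁻¹)) * h
    have hchiQ : chiI i Q = 0 := by
      rw [hQ, map_mul, map_prod, Finset.prod_eq_zero hi hfac, mul_zero]
    have h0 : chiI i (phi g) = 0 := by
      obtain ⟨w, hw⟩ := hg
      rw [hw, map_mul, hchiQ, zero_mul]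
    have h1 : alphaH (aeval (uI i) g) = 0 := by
      have h2 := AlgHom.congr_fun (compI i hiq) g
      simp only [AlgHom.comp_apply] at h2
      rw [← h2, h0]
    have h2 : aeval (uI i) g = 0 := alpha_inj (by rw [h1, map_zero])
    exact (dvd_iff_eval 2 (uI i) (huI i) (hcI i) g).mpr h2
  -- Step 2: `X 0` divides `g`
  have h0dvd : (X 0 : S3) ∣ g := by
    have hchiQ : chi0H Q = 0 := by
      rw [hQ, map_mul]
      have : chi0H (X 2) = 0 := by simp [chi0H]
      rw [this, zero_mul]
    have h0 : chi0H (phi g) = 0 := by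
      obtain ⟨w, hw⟩ := hg
      rw [hw, map_mul, hchiQ, zero_mul]
    have h1 : eta0 (aeval u0 g) = 0 := by
      have h2 := AlgHom.congr_fun comp0 g
      simp only [AlgHom.comp_apply] at h2
      rw [← h2, h0]
    have h2 : aeval u0 g = 0 := eta0_inj (by rw [h1, map_zero])
    have := (dvd_iff_eval 0 u0 hu0 hc0 g).mpr h2
    simpa [u0] using this
  -- Step 3: combine
  obtain ⟨m, hm⟩ := h0dvd
  have hqm : ∀ i ∈ Icc 1 ℓ, ((X 2 : S3) - uI i 2) ∣ m := by
    intro i hi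
    have hd : ((X 2 : S3) - uI i 2) ∣ X 0 * m := hm ▸ hq i hi
    rcases (qI_prime i).dvd_or_dvd hd with hc | hc
    · exfalso
      rw [dvd_iff_eval 2 (uI i) (huI i) (hcI i)] at hc
      simp only [aeval_X] at hc
      rw [show uI i 0 = X 0 from rfl] at hc
      exact MvPolynomial.X_ne_zero 0 hc
    · exact hc
  have hnd : ∀ i ∈ Icc 1 ℓ, ∀ j ∈ Icc 1 ℓ, i ≠ j →
      ¬ ((X 2 : S3) - uI i 2) ∣ ((X 2 : S3) - uI j 2) := by
    intro i hi j hj hij hdvd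
    have hi1 : 1 ≤ i := (mem_Icc.mp hi).1
    have hj1 : 1 ≤ j := (mem_Icc.mp hj).1
    rw [dvd_iff_eval 2 (uI i) (huI i) (hcI i)] at hdvd
    have := congrArg (eval ![0, 1, 0]) hdvd
    simp [uI] at this
    have h2 : ((i : ℚ) - j) * ((i : ℚ) + j) = 0 := by linear_combination this
    rcases mul_eq_zero.mp h2 with hc | hc
    · have : (i : ℚ) = j := by linarith
      exact hij (Nat.cast_injective this)
    · have hi' : (1 : ℚ) ≤ (i : ℚ) := by exact_mod_cast hi1
      have hj' : (1 : ℚ) ≤ (j : ℚ) := by exact_mod_cast hj1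
      linarith
  have hprod : (∏ i ∈ Icc 1 ℓ, ((X 2 : S3) - uI i 2)) ∣ m :=
    prod_primes_dvd'' _ _ m (fun i _ => qI_prime i) hnd hqm
  -- rewrite target product
  have hfac : ∀ i ∈ Icc 1 ℓ, (X 0 ^ 2 + C ((i : ℚ) ^ 4) * X 1 - C ((i : ℚ) ^ 2) * X 2 : S3)
      = -C ((i : ℚ) ^ 2) * ((X 2 : S3) - uI i 2) := by
    intro i hi
    have hi1 : 1 ≤ i := (mem_Icc.mp hi).1
    have hiq : (i : ℚ) ≠ 0 := Nat.cast_ne_zero.mpr (by omega)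
    have hA : (C ((i : ℚ) ^ 2) : S3) * C ((i : ℚ) ^ 2)⁻¹ = 1 := by
      rw [← C_mul, mul_inv_cancel₀ (pow_ne_zero 2 hiq), C_1]
    have hB : (C ((i : ℚ) ^ 2) : S3) * C ((i : ℚ) ^ 2) = C ((i : ℚ) ^ 4) := by
      rw [← C_mul, ← pow_add]
    rw [show uI i 2 = C ((i : ℚ) ^ 2)⁻¹ * X 0 ^ 2 + C ((i : ℚ) ^ 2) * X 1 from rfl]
    linear_combination (-(X 0 ^ 2)) * hA + (-(X 1)) * hB
  set r : ℚ := ∏ i ∈ Icc 1 ℓ, (-((i : ℚ) ^ 2)) with hr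
  have hrne : r ≠ 0 := by
    rw [hr]
    apply Finset.prod_ne_zero_iff.mpr
    intro i hi
    have hi1 : 1 ≤ i := (mem_Icc.mp hi).1
    have : (i : ℚ) ≠ 0 := Nat.cast_ne_zero.mpr (by omega)
    intro hc
    apply this
    have : ((i : ℚ) ^ 2) = 0 := by linarith [neg_eq_zero.mp hc]
    exact pow_eq_zero_iff (by norm_num) |>.mp this
  have hprodp : (∏ i ∈ Icc 1 ℓ, (X 0 ^ 2 + C ((i : ℚ) ^ 4) * X 1 - C ((i : ℚ) ^ 2) * X 2 : S3))
      = C r * ∏ i ∈ Icc 1 ℓ, ((X 2 : S3) - uI i 2) := by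
    rw [Finset.prod_congr rfl hfac, Finset.prod_mul_distrib, hr, map_prod]
    congr 1
    apply Finset.prod_congr rfl
    intro i _
    rw [map_neg]
  obtain ⟨d, hd⟩ := hprod
  have hCr : (C r : S3) * C r⁻¹ = 1 := by
    rw [← C_mul, mul_inv_cancel₀ hrne, C_1]
  refine ⟨C r⁻¹ * d, ?_⟩
  rw [hm, hd, hprodp]
  linear_combination (-(X 0 * (∏ i ∈ Icc 1 ℓ, ((X 2 : S3) - uI i 2)) * d)) * hCr
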